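/- (Preconditioned-score decomposition for radial kernels.) Fix τ > 0 and a radial kernel k_τ(x,y) = exp(−ρ(‖x−y‖₂/τ)) with b_τ(r) = ρ'(r/τ)/(r/τ). Let π be a probability distribution with density such that the expectations below are finite and b_τ(r) > 0 on the support of the kernel-reweighted law π_τ(·|x). Define α_{π,τ}(x) = E_{y∼π_τ(·|x)}[ b_τ(‖x−y‖₂)^{−1} ] and δ_{π,τ}(x) = Cov_{y∼π_τ(·|x)}( b_τ(‖x−y‖₂)^{−1}, b_τ(‖x−y‖₂)(y−x) ) ∈ ℝ^D (a scalar–vector covariance). Then for every x ∈ ℝ^D, the mean-shift direction satisfies V_{π,k_τ}(x) = τ² α_{π,τ}(x) s_{π,k_τ}(x) + δ_{π,τ}(x). Consequently, for two distributions p, q and Δ_{p,q}(x) = η(V_{p,k_τ}(x) − V_{q,k_τ}(x)), one has Δ_{p,q}(x) = ητ²(α_{p,τ}(x) s_{p,k_τ}(x) − α_{q,τ}(x) s_{q,k_τ}(x)) + η(δ_{p,τ}(x) − δ_{q,τ}(x)). -/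

import Mathlib

open MeasureTheory

/-- A translation-invariant radial kernel `k_τ(x,y) = exp(−ρ(‖x−y‖₂/τ))`. -/
noncomputable def radialKernel (D : ℕ) (ρ : ℝ → ℝ) (τ : ℝ)
    (x y : EuclideanSpace ℝ (Fin D)) : ℝ :=
  Real.exp (-ρ (‖x - y‖ / τ))

/-- The radius-dependent weight `b_τ(r) = ρ'(r/τ)/(r/τ)`. -/
noncomputable def radialWeight (ρ' : ℝ → ℝ) (τ r : ℝ) : ℝ :=
  ρ' (r / τ) / (r / τ)

/-- The kernel-smoothed profile `π_{k}(x) = E_{y∼π}[k(x,y)]`. -/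
noncomputable def smoothedProfile {D : ℕ}
    (k : EuclideanSpace ℝ (Fin D) → EuclideanSpace ℝ (Fin D) → ℝ)
    (π : Measure (EuclideanSpace ℝ (Fin D))) (x : EuclideanSpace ℝ (Fin D)) : ℝ :=
  ∫ y, k x y ∂π

/-- The mean-shift direction `V_{π,k}(x)`. -/
noncomputable def meanShift {D : ℕ}
    (k : EuclideanSpace ℝ (Fin D) → EuclideanSpace ℝ (Fin D) → ℝ)
    (π : Measure (EuclideanSpace ℝ (Fin D))) (x : EuclideanSpace ℝ (Fin D)) :
    EuclideanSpace ℝ (Fin D) :=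
  (smoothedProfile k π x)⁻¹ • ∫ y, k x y • (y - x) ∂π

/-- The kernel-induced score `s_{π,k}(x) = ∇_x log π_{k}(x)`. -/
noncomputable def kernelScore {D : ℕ}
    (k : EuclideanSpace ℝ (Fin D) → EuclideanSpace ℝ (Fin D) → ℝ)
    (π : Measure (EuclideanSpace ℝ (Fin D))) (x : EuclideanSpace ℝ (Fin D)) :
    EuclideanSpace ℝ (Fin D) :=
  gradient (fun z => Real.log (smoothedProfile k π z)) x

/-- Vector-valued expectation under the kernel-reweighted law `π_τ(y|x) ∝ k(x,y)π(y)`. -/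
noncomputable def reweightedExp {D : ℕ}
    (k : EuclideanSpace ℝ (Fin D) → EuclideanSpace ℝ (Fin D) → ℝ)
    (π : Measure (EuclideanSpace ℝ (Fin D))) (x : EuclideanSpace ℝ (Fin D))
    (g : EuclideanSpace ℝ (Fin D) → EuclideanSpace ℝ (Fin D)) :
    EuclideanSpace ℝ (Fin D) :=
  (smoothedProfile k π x)⁻¹ • ∫ y, k x y • g y ∂π

/-- Scalar-valued expectation under the kernel-reweighted law `π_τ(y|x) ∝ k(x,y)π(y)`. -/
noncomputable def reweightedExpR {D : ℕ}
    (k : EuclideanSpace ℝ (Fin D) → EuclideanSpace ℝ (Fin D) → ℝ)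
    (π : Measure (EuclideanSpace ℝ (Fin D))) (x : EuclideanSpace ℝ (Fin D))
    (g : EuclideanSpace ℝ (Fin D) → ℝ) : ℝ :=
  (smoothedProfile k π x)⁻¹ * ∫ y, k x y * g y ∂π

/-- The scalar preconditioner `α_{π,τ}(x) = E_{y∼π_τ(·|x)}[ b_τ(‖x−y‖)⁻¹ ]`. -/
noncomputable def precondAlpha {D : ℕ} (ρ ρ' : ℝ → ℝ) (τ : ℝ)
    (π : Measure (EuclideanSpace ℝ (Fin D))) (x : EuclideanSpace ℝ (Fin D)) : ℝ :=
  reweightedExpR (radialKernel D ρ τ) π x (fun y => (radialWeight ρ' τ ‖x - y‖)⁻¹)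

/-- The covariance residual
`δ_{π,τ}(x) = Cov_{y∼π_τ(·|x)}( b_τ(‖x−y‖)⁻¹ , b_τ(‖x−y‖)(y−x) )` (scalar–vector
covariance `Cov(A,Z) = E[AZ] − E[A]E[Z]`). -/
noncomputable def covResidual {D : ℕ} (ρ ρ' : ℝ → ℝ) (τ : ℝ)
    (π : Measure (EuclideanSpace ℝ (Fin D))) (x : EuclideanSpace ℝ (Fin D)) :
    EuclideanSpace ℝ (Fin D) :=
  reweightedExp (radialKernel D ρ τ) π x
      (fun y => (radialWeight ρ' τ ‖x - y‖)⁻¹ • radialWeight ρ' τ ‖x - y‖ • (y - x))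
    - precondAlpha ρ ρ' τ π x •
      reweightedExp (radialKernel D ρ τ) π x (fun y => radialWeight ρ' τ ‖x - y‖ • (y - x))

/-- Regularity package for a distribution `π` and radial kernel data `(ρ, ρ', τ)`:
absolute continuity, finiteness of the relevant expectations, positivity of the smoothed
profile, positivity of `b_τ` on the support of the reweighted law, and a local domination
bound allowing differentiation under the integral sign. -/
def RadialRegular {D : ℕ} (ρ ρ' : ℝ → ℝ) (τ : ℝ)
    (π : Measure (EuclideanSpace ℝ (Fin D))) : Prop :=
  π ≪ volume ∧
  ∀ x : EuclideanSpace ℝ (Fin D),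
    Integrable (fun y => radialKernel D ρ τ x y) π ∧
    Integrable (fun y => (radialKernel D ρ τ x y * radialWeight ρ' τ ‖x - y‖) • (y - x)) π ∧
    Integrable (fun y => radialKernel D ρ τ x y • (y - x)) π ∧
    Integrable (fun y => radialKernel D ρ τ x y * (radialWeight ρ' τ ‖x - y‖)⁻¹) π ∧
    0 < smoothedProfile (radialKernel D ρ τ) π x ∧
    (∀ᵐ y ∂π, 0 < radialWeight ρ' τ ‖x - y‖) ∧
    (∃ ε > 0, ∃ g : EuclideanSpace ℝ (Fin D) → ℝ, Integrable g π ∧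
      ∀ᵐ y ∂π, ∀ x' ∈ Metric.ball x ε,
        (τ ^ 2)⁻¹ * |radialWeight ρ' τ ‖x' - y‖| * ‖y - x'‖ * radialKernel D ρ τ x' y ≤ g y)

section AuxLemmas

open Metric Set

variable {D : ℕ} {ρ ρ' : ℝ → ℝ} {τ : ℝ}

private lemma hasDerivAt_phi (hρ : ∀ r, HasDerivAt ρ (ρ' r) r) (hτ : τ ≠ 0) (r : ℝ) :
    HasDerivAt (fun t => Real.exp (-ρ (t / τ)))
      (-(ρ' (r / τ) / τ) * Real.exp (-ρ (r / τ))) r := by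
  have h1 : HasDerivAt (fun t : ℝ => t / τ) (1 / τ) r := by
    simpa using (hasDerivAt_id r).div_const τ
  have h2 : HasDerivAt (fun t => ρ (t / τ)) (ρ' (r / τ) * (1 / τ)) r :=
    (hρ (r / τ)).comp r h1
  have h3 := (Real.hasDerivAt_exp (-ρ (r / τ))).comp r h2.neg
  refine h3.congr_deriv ?_
  ring

private lemma hasFDerivAt_norm_sub {x y : EuclideanSpace ℝ (Fin D)} (h : x ≠ y) :
    HasFDerivAt (fun z : EuclideanSpace ℝ (Fin D) => ‖z - y‖)
      (innerSL ℝ (‖x - y‖⁻¹ • (x - y))) x := by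
  have hxy : x - y ≠ 0 := sub_ne_zero.mpr h
  have hr : 0 < ‖x - y‖ := norm_pos_iff.mpr hxy
  have hid : HasFDerivAt (fun z : EuclideanSpace ℝ (Fin D) => z - y)
      (ContinuousLinearMap.id ℝ (EuclideanSpace ℝ (Fin D))) x :=
    (hasFDerivAt_id x).sub_const y
  have hsq := hid.norm_sq
  have hs : (‖x - y‖ ^ 2 : ℝ) ≠ 0 := by positivity
  have h2 := (Real.hasDerivAt_sqrt hs).comp_hasFDerivAt x hsq
  have hfun : (fun z : EuclideanSpace ℝ (Fin D) => ‖z - y‖)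
      = fun z => Real.sqrt (‖z - y‖ ^ 2) := by
    funext z; rw [Real.sqrt_sq (norm_nonneg _)]
  rw [hfun]
  refine h2.congr_fderiv ?_
  have hss : Real.sqrt (‖x - y‖ ^ 2) = ‖x - y‖ := Real.sqrt_sq (norm_nonneg _)
  ext v
  simp only [innerSL_apply_apply, real_inner_smul_left, ContinuousLinearMap.coe_smul',
    Pi.smul_apply, ContinuousLinearMap.coe_comp', Function.comp_apply,
    ContinuousLinearMap.coe_id', id_eq, two_smul, ContinuousLinearMap.add_apply,
    smul_eq_mul, hss]
  field_simp
  ring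

private lemma hasFDerivAt_radialKernel (hτ : 0 < τ) (hρ : ∀ r, HasDerivAt ρ (ρ' r) r)
    {x y : EuclideanSpace ℝ (Fin D)} (h : y ≠ x) :
    HasFDerivAt (fun z => radialKernel D ρ τ z y)
      (((τ ^ 2)⁻¹ * radialWeight ρ' τ ‖x - y‖ * radialKernel D ρ τ x y) •
        innerSL ℝ (y - x)) x := by
  have hr : 0 < ‖x - y‖ := norm_pos_iff.mpr (sub_ne_zero.mpr h.symm)
  have hn := hasFDerivAt_norm_sub (y := y) h.symm
  have hφ := hasDerivAt_phi hρ hτ.ne' ‖x - y‖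
  have h2 := hφ.comp_hasFDerivAt x hn
  refine h2.congr_fderiv ?_
  ext v
  simp only [radialKernel, radialWeight, innerSL_apply_apply, real_inner_smul_left,
    ContinuousLinearMap.coe_smul', Pi.smul_apply, Function.comp_apply, smul_eq_mul]
  have hxy : x - y = -(y - x) := by abel
  rw [hxy, inner_neg_left]
  have hτ' : τ ≠ 0 := hτ.ne'
  have hr' : ‖x - y‖ ≠ 0 := hr.ne'
  field_simp

private lemma abs_sub_le_of_deriv {φ φ' : ℝ → ℝ} {K a b : ℝ}
    (hφ : ∀ t, HasDerivAt φ (φ' t) t) (hab : a ≤ b)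
    (hbd : ∀ t ∈ Set.Ioc a b, |φ' t| ≤ K) :
    |φ b - φ a| ≤ K * (b - a) := by
  have hc : Continuous φ := continuous_iff_continuousAt.mpr fun t => (hφ t).continuousAt
  have key := norm_image_sub_le_of_norm_deriv_right_le_segment
    (f := fun t => φ (a + b - t)) (f' := fun t => -φ' (a + b - t)) (a := a) (b := b)
    (hc.comp (by continuity)).continuousOn
    (fun t _ => by
      have h1 : HasDerivAt (fun t : ℝ => a + b - t) (-1) t := by
        simpa using (hasDerivAt_id' t).const_sub (a + b)
      have h2 := (hφ (a + b - t)).comp t h1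
      have h3 : HasDerivAt (fun t : ℝ => φ (a + b - t)) (-φ' (a + b - t)) t := by
        exact h2.congr_deriv (by ring)
      exact h3.hasDerivWithinAt)
    (fun t ht => by
      have hmem : a + b - t ∈ Set.Ioc a b := ⟨by linarith [ht.2], by linarith [ht.1]⟩
      rw [Real.norm_eq_abs, abs_neg]
      exact hbd _ hmem)
    b (Set.right_mem_Icc.mpr hab)
  rw [show a + b - b = a by ring, show a + b - a = b by ring] at key
  calc |φ b - φ a| = ‖φ a - φ b‖ := by rw [Real.norm_eq_abs, abs_sub_comm]
  _ ≤ K * (b - a) := key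

private lemma lipschitz_kernel (hτ : 0 < τ) (hρ : ∀ r, HasDerivAt ρ (ρ' r) r)
    {x₀ y : EuclideanSpace ℝ (Fin D)} {ε gy : ℝ}
    (hbd : ∀ x' ∈ Metric.ball x₀ ε,
      (τ ^ 2)⁻¹ * |radialWeight ρ' τ ‖x' - y‖| * ‖y - x'‖ * radialKernel D ρ τ x' y ≤ gy) :
    LipschitzOnWith (Real.nnabs gy) (fun x => radialKernel D ρ τ x y) (Metric.ball x₀ ε) := by
  rw [lipschitzOnWith_iff_norm_sub_le]
  have key : ∀ x₁ ∈ Metric.ball x₀ ε, ∀ x₂ ∈ Metric.ball x₀ ε, ‖x₂ - y‖ ≤ ‖x₁ - y‖ →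
      ‖radialKernel D ρ τ x₁ y - radialKernel D ρ τ x₂ y‖ ≤ |gy| * ‖x₁ - x₂‖ := by
    intro x₁ h₁ x₂ h₂ hle
    have hφ : ∀ t, HasDerivAt (fun t => Real.exp (-ρ (t / τ)))
        (-(ρ' (t / τ) / τ) * Real.exp (-ρ (t / τ))) t := fun t => hasDerivAt_phi hρ hτ.ne' t
    have hbd' : ∀ t ∈ Set.Ioc ‖x₂ - y‖ ‖x₁ - y‖,
        |(-(ρ' (t / τ) / τ) * Real.exp (-ρ (t / τ)))| ≤ |gy| := by
      intro t ht
      have ht0 : 0 < t := lt_of_le_of_lt (norm_nonneg _) ht.1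
      have hcont : ContinuousOn (fun u : ℝ => ‖x₂ + u • (x₁ - x₂) - y‖) (Set.Icc 0 1) := by
        apply Continuous.continuousOn
        continuity
      have hf0 : ‖x₂ + (0 : ℝ) • (x₁ - x₂) - y‖ = ‖x₂ - y‖ := by simp
      have hf1 : ‖x₂ + (1 : ℝ) • (x₁ - x₂) - y‖ = ‖x₁ - y‖ := by
        rw [one_smul]
        congr 1
        abel
      have hIVT := intermediate_value_Icc (zero_le_one) hcont
      rw [hf0, hf1] at hIVT
      obtain ⟨u, hu, hut'⟩ := hIVT ⟨le_of_lt ht.1, ht.2⟩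
      have hut : ‖x₂ + u • (x₁ - x₂) - y‖ = t := hut'
      have hzball : x₂ + u • (x₁ - x₂) ∈ Metric.ball x₀ ε := by
        have hzeq : x₂ + u • (x₁ - x₂) = (1 - u) • x₂ + u • x₁ := by
          module
        rw [hzeq]
        exact (convex_ball x₀ ε) h₂ h₁ (by linarith [hu.2]) hu.1 (by ring)
      have hb := hbd _ hzball
      rw [hut] at hb
      have hky : radialKernel D ρ τ (x₂ + u • (x₁ - x₂)) y = Real.exp (-ρ (t / τ)) := by
        rw [radialKernel, hut]
      rw [hky, norm_sub_rev, hut] at hb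
      have habs : |(-(ρ' (t / τ) / τ) * Real.exp (-ρ (t / τ)))|
          = (τ ^ 2)⁻¹ * |radialWeight ρ' τ t| * t * Real.exp (-ρ (t / τ)) := by
        rw [radialWeight, abs_mul, abs_neg, abs_div, abs_of_pos hτ, abs_div,
          abs_of_pos (div_pos ht0 hτ), Real.abs_exp]
        field_simp
      rw [habs]
      exact le_trans hb (le_abs_self gy)
    have hmvt := abs_sub_le_of_deriv hφ hle hbd'
    have hdist : ‖x₁ - y‖ - ‖x₂ - y‖ ≤ ‖x₁ - x₂‖ := by
      have h5 := abs_norm_sub_norm_le (x₁ - y) (x₂ - y)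
      rw [show x₁ - y - (x₂ - y) = x₁ - x₂ by abel] at h5
      exact le_trans (le_abs_self _) h5
    have hrk : ‖radialKernel D ρ τ x₁ y - radialKernel D ρ τ x₂ y‖
        = |Real.exp (-ρ (‖x₁ - y‖ / τ)) - Real.exp (-ρ (‖x₂ - y‖ / τ))| := rfl
    rw [hrk]
    calc |Real.exp (-ρ (‖x₁ - y‖ / τ)) - Real.exp (-ρ (‖x₂ - y‖ / τ))|
        ≤ |gy| * (‖x₁ - y‖ - ‖x₂ - y‖) := hmvt
    _ ≤ |gy| * ‖x₁ - x₂‖ := mul_le_mul_of_nonneg_left hdist (abs_nonneg gy)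
  intro x₁ h₁ x₂ h₂
  have hco : ((Real.nnabs gy : NNReal) : ℝ) = |gy| := Real.coe_nnabs gy
  rw [hco]
  rcases le_total ‖x₂ - y‖ ‖x₁ - y‖ with hle | hle
  · exact key x₁ h₁ x₂ h₂ hle
  · rw [norm_sub_rev, norm_sub_rev x₁ x₂]
    exact key x₂ h₂ x₁ h₁ hle

private lemma score_eq (hτ : 0 < τ) (hρ : ∀ r, HasDerivAt ρ (ρ' r) r) (hD : 0 < D)
    (π : Measure (EuclideanSpace ℝ (Fin D))) (hreg : RadialRegular ρ ρ' τ π)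
    (x : EuclideanSpace ℝ (Fin D)) :
    kernelScore (radialKernel D ρ τ) π x
      = ((τ ^ 2)⁻¹ * (smoothedProfile (radialKernel D ρ τ) π x)⁻¹) •
          ∫ y, (radialKernel D ρ τ x y * radialWeight ρ' τ ‖x - y‖) • (y - x) ∂π := by
  obtain ⟨hac, hall⟩ := hreg
  obtain ⟨hkint, hkbint, hkvint, hkbinv, hfpos, hbpos, ε, εpos, g, hgint, hgbd⟩ := hall x
  haveI : Nontrivial (EuclideanSpace ℝ (Fin D)) := by
    refine ⟨⟨EuclideanSpace.single ⟨0, hD⟩ 1, 0, fun hcontra => ?_⟩⟩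
    have h1 := congrArg norm hcontra
    rw [EuclideanSpace.norm_single] at h1
    simp at h1
  have hxnull : π {x} = 0 := hac (measure_singleton x)
  have hne : ∀ᵐ y ∂π, y ≠ x := by
    rw [MeasureTheory.ae_iff]
    convert hxnull using 2
    ext y; simp
  set k := radialKernel D ρ τ with hk
  set F' : EuclideanSpace ℝ (Fin D) → (EuclideanSpace ℝ (Fin D) →L[ℝ] ℝ) :=
    fun y => ((τ ^ 2)⁻¹ * radialWeight ρ' τ ‖x - y‖ * k x y) • innerSL ℝ (y - x) with hF'
  have hρc : Continuous ρ := continuous_iff_continuousAt.mpr fun r => (hρ r).continuousAt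
  have hkcont : ∀ x' : EuclideanSpace ℝ (Fin D), Continuous (fun y => k x' y) := by
    intro x'
    exact Real.continuous_exp.comp
      ((hρc.comp (((continuous_const.sub continuous_id).norm).div_const τ)).neg)
  have hF_meas : ∀ᶠ x' in nhds x, AEStronglyMeasurable (fun y => k x' y) π :=
    Filter.Eventually.of_forall fun x' => (hkcont x').aestronglyMeasurable
  have hρ'meas : Measurable ρ' := by
    have hde : ρ' = deriv ρ := funext fun r => ((hρ r).deriv).symm
    rw [hde]; exact measurable_deriv ρ
  have hnmeas : Measurable fun y : EuclideanSpace ℝ (Fin D) => ‖x - y‖ / τ :=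
    (((continuous_const.sub continuous_id).norm).div_const τ).measurable
  have hcmeas : Measurable fun y : EuclideanSpace ℝ (Fin D) =>
      ((τ ^ 2)⁻¹ * radialWeight ρ' τ ‖x - y‖ * k x y) := by
    apply Measurable.mul
    · apply Measurable.mul measurable_const
      exact (hρ'meas.comp hnmeas).div hnmeas
    · exact (hkcont x).measurable
  have hF'meas : AEStronglyMeasurable F' π := by
    apply AEStronglyMeasurable.smul hcmeas.aestronglyMeasurable
    exact ((innerSL ℝ).continuous.comp (continuous_id.sub continuous_const)).aestronglyMeasurable
  have h_lip : ∀ᵐ y ∂π, LipschitzOnWith (Real.nnabs (g y)) (fun x' => k x' y)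
      (Metric.ball x ε) := hgbd.mono fun y hy => lipschitz_kernel hτ hρ hy
  have h_diff : ∀ᵐ y ∂π, HasFDerivAt (fun x' => k x' y) (F' y) x :=
    hne.mono fun y hy => hasFDerivAt_radialKernel hτ hρ hy
  obtain ⟨hF'int, hderiv⟩ := hasFDerivAt_integral_of_dominated_loc_of_lip (Metric.ball_mem_nhds x εpos) hF_meas hkint
    hF'meas h_lip hgint h_diff
  have hvint : Integrable
      (fun y => ((τ ^ 2)⁻¹ * radialWeight ρ' τ ‖x - y‖ * k x y) • (y - x)) π := by
    have h0 := hkbint.smul ((τ ^ 2)⁻¹ : ℝ)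
    apply h0.congr
    filter_upwards with y
    simp only [Pi.smul_apply, smul_smul]
    congr 1
    ring
  have hFeq : ∀ y, F' y
      = innerSL ℝ (((τ ^ 2)⁻¹ * radialWeight ρ' τ ‖x - y‖ * k x y) • (y - x)) := by
    intro y
    simp only [hF']
    rw [_root_.map_smul]
  have hint_comm : (∫ y, F' y ∂π)
      = innerSL ℝ (∫ y, ((τ ^ 2)⁻¹ * radialWeight ρ' τ ‖x - y‖ * k x y) • (y - x) ∂π) := by
    simp_rw [hFeq]
    exact ContinuousLinearMap.integral_comp_comm (innerSL ℝ) hvint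
  have hIb : (∫ y, ((τ ^ 2)⁻¹ * radialWeight ρ' τ ‖x - y‖ * k x y) • (y - x) ∂π)
      = (τ ^ 2)⁻¹ • ∫ y, (k x y * radialWeight ρ' τ ‖x - y‖) • (y - x) ∂π := by
    rw [← integral_smul]
    congr 1
    funext y
    rw [smul_smul]
    congr 1
    ring
  have hfne : smoothedProfile k π x ≠ 0 := hfpos.ne'
  have hgradf : HasGradientAt (smoothedProfile k π)
      ((τ ^ 2)⁻¹ • ∫ y, (k x y * radialWeight ρ' τ ‖x - y‖) • (y - x) ∂π) x := by
    rw [hasGradientAt_iff_hasFDerivAt]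
    refine hderiv.congr_fderiv ?_
    rw [hint_comm, hIb]
    ext v
    simp [InnerProductSpace.toDual_apply_apply]
  have hlog : HasGradientAt (fun z => Real.log (smoothedProfile k π z))
      (((τ ^ 2)⁻¹ * (smoothedProfile k π x)⁻¹) •
        ∫ y, (k x y * radialWeight ρ' τ ‖x - y‖) • (y - x) ∂π) x := by
    rw [hasGradientAt_iff_hasFDerivAt]
    have hcomp := (Real.hasDerivAt_log hfne).comp_hasFDerivAt x
      (hasGradientAt_iff_hasFDerivAt.mp hgradf)
    refine hcomp.congr_fderiv ?_
    ext v
    simp only [InnerProductSpace.toDual_apply_apply, real_inner_smul_left,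
      ContinuousLinearMap.coe_smul', Pi.smul_apply, smul_eq_mul]
    ring
  exact hlog.gradient

end AuxLemmas

/-- Preconditioned-score decomposition of mean shift for radial kernels.
For a radial kernel with differentiable `ρ` and `b_τ > 0` on the support of the reweighted
law, the mean shift decomposes as `V_{π,k_τ}(x) = τ² α_{π,τ}(x) s_{π,k_τ}(x) + δ_{π,τ}(x)`;
consequently the drifting field satisfies
`Δ_{p,q}(x) = ητ²(α_{p,τ}(x) s_{p,k_τ}(x) − α_{q,τ}(x) s_{q,k_τ}(x)) + η(δ_{p,τ}(x) − δ_{q,τ}(x))`. -/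
theorem radial_precond_decomposition {D : ℕ} (ρ ρ' : ℝ → ℝ) (τ η : ℝ)
    (hτ : 0 < τ) (hη : 0 < η)
    (hρ : ∀ r, HasDerivAt ρ (ρ' r) r)
    (p q : Measure (EuclideanSpace ℝ (Fin D)))
    [IsProbabilityMeasure p] [IsProbabilityMeasure q]
    (hp : RadialRegular ρ ρ' τ p) (hq : RadialRegular ρ ρ' τ q) :
    (∀ π : Measure (EuclideanSpace ℝ (Fin D)), (π = p ∨ π = q) →
      ∀ x, meanShift (radialKernel D ρ τ) π x
        = (τ ^ 2 * precondAlpha ρ ρ' τ π x) • kernelScore (radialKernel D ρ τ) π x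
          + covResidual ρ ρ' τ π x)
    ∧
    (∀ x, η • (meanShift (radialKernel D ρ τ) p x - meanShift (radialKernel D ρ τ) q x)
      = (η * τ ^ 2) • (precondAlpha ρ ρ' τ p x • kernelScore (radialKernel D ρ τ) p x
            - precondAlpha ρ ρ' τ q x • kernelScore (radialKernel D ρ τ) q x)
        + η • (covResidual ρ ρ' τ p x - covResidual ρ ρ' τ q x)) := by
  
  rcases Nat.eq_zero_or_pos D with hD | hD
  · subst hD
    haveI : Subsingleton (EuclideanSpace ℝ (Fin 0)) :=
      ⟨fun a b => PiLp.ext fun i => Fin.elim0 i⟩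
    exact ⟨fun π _ x => Subsingleton.elim _ _, fun x => Subsingleton.elim _ _⟩
  have main : ∀ π : Measure (EuclideanSpace ℝ (Fin D)), RadialRegular ρ ρ' τ π →
      ∀ x, meanShift (radialKernel D ρ τ) π x
        = (τ ^ 2 * precondAlpha ρ ρ' τ π x) • kernelScore (radialKernel D ρ τ) π x
          + covResidual ρ ρ' τ π x := by
    intro π hreg x
    obtain ⟨hac, hall⟩ := hreg
    obtain ⟨hkint, hkbint, hkvint, hkbinv, hfpos, hbpos, hdom⟩ := hall x
    have hscore := score_eq hτ hρ hD π ⟨hac, hall⟩ x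
    set k := radialKernel D ρ τ with hk
    set f := smoothedProfile k π x with hf
    set α := precondAlpha ρ ρ' τ π x with hα
    set Ib := ∫ y, (k x y * radialWeight ρ' τ ‖x - y‖) • (y - x) ∂π with hIbdef
    rw [hscore]
    have hτ2 : (τ ^ 2 : ℝ) ≠ 0 := by positivity
    have h1 : (τ ^ 2 * α) • (((τ ^ 2)⁻¹ * f⁻¹) • Ib) = (α * f⁻¹) • Ib := by
      rw [smul_smul]
      congr 1
      field_simp
    have hcov : covResidual ρ ρ' τ π x
        = f⁻¹ • (∫ y, k x y • (y - x) ∂π) - (α * f⁻¹) • Ib := by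
      rw [covResidual]
      unfold reweightedExp
      rw [← hα, ← hk, ← hf]
      congr 1
      · congr 1
        apply integral_congr_ae
        filter_upwards [hbpos] with y hy
        simp only [smul_smul]
        rw [inv_mul_cancel₀ hy.ne', mul_one]
      · rw [smul_smul]
        congr 1
        rw [hIbdef]
        congr 1
        funext y
        rw [smul_smul]
    rw [hcov, h1]
    show f⁻¹ • (∫ y, k x y • (y - x) ∂π) = _
    abel
  refine ⟨fun π hπ x => by rcases hπ with rfl | rfl; exacts [main π hp x, main π hq x], ?_⟩
  intro x
  rw [main p hp x, main q hq x]
  module
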